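/- The 2-Lipschitz saturation is contained in the 3-Lipschitz saturation: if M has generic rank k on each irreducible component of X, then M_{S_2} ⊆ M_{S_3}. -/
import Mathlib


/-- Integral closure of a submodule `N ⊆ A^ι` by the curve criterion. -/
def Lip.curveCl {A : Type*} [CommRing A] {ι : Type*} (N : Submodule A (ι → A)) :
    Set (ι → A) :=
  {h | ∀ φ : A →+* PowerSeries ℂ,
    (fun i => φ (h i)) ∈
      Submodule.span (PowerSeries ℂ) ((fun m : ι → A => fun i => φ (m i)) '' (N : Set (ι → A)))}

/-- The double of an element of `R`. -/
def Lip.idDouble {R S : Type*} [CommRing R] [CommRing S] (φ1 φ2 : R →+* S) (a : R) :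
    Fin 2 → S := ![φ1 a, φ2 a]

/-- The double of an ideal `I ⊆ R`. -/
def Lip.idealDouble {R S : Type*} [CommRing R] [CommRing S] (φ1 φ2 : R →+* S)
    (I : Ideal R) : Submodule S (Fin 2 → S) :=
  Submodule.span S (Lip.idDouble φ1 φ2 '' (I : Set R))

/-- The Lipschitz saturation of an ideal `I ⊆ R`, via Gaffney's characterization
`a ∈ I_S ↔ a_D ∈ closure (I_D)`. -/
def Lip.sat {R S : Type*} [CommRing R] [CommRing S] (φ1 φ2 : R →+* S) (I : Ideal R) :
    Set R :=
  {a | Lip.idDouble φ1 φ2 a ∈ Lip.curveCl (Lip.idealDouble φ1 φ2 I)}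

namespace Lip

variable {R S : Type*} [CommRing R] [CommRing S]

lemma sat_mono (φ1 φ2 : R →+* S) {I J : Ideal R} (hIJ : I ≤ J) :
    sat φ1 φ2 I ⊆ sat φ1 φ2 J := fun _ ha φ =>
  Submodule.span_mono (Set.image_mono (Submodule.span_mono (Set.image_mono hIJ))) (ha φ)

lemma mem_sat_of_mem (φ1 φ2 : R →+* S) {I : Ideal R} {a : R} (ha : a ∈ I) :
    a ∈ sat φ1 φ2 I := fun φ =>
  Submodule.subset_span ⟨_, Submodule.subset_span ⟨a, ha, rfl⟩, rfl⟩

lemma idDouble_add (φ1 φ2 : R →+* S) (a b : R) :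
    idDouble φ1 φ2 (a + b) = idDouble φ1 φ2 a + idDouble φ1 φ2 b := by
  funext i
  fin_cases i <;> simp [idDouble]

lemma idDouble_mul (φ1 φ2 : R →+* S) (a b : R) :
    idDouble φ1 φ2 (a * b) = idDouble φ1 φ2 a * idDouble φ1 φ2 b := by
  funext i
  fin_cases i <;> simp [idDouble]

lemma zero_mem_sat (φ1 φ2 : R →+* S) (I : Ideal R) : 0 ∈ sat φ1 φ2 I :=
  mem_sat_of_mem φ1 φ2 (zero_mem I)

lemma add_mem_sat (φ1 φ2 : R →+* S) {I : Ideal R} {a b : R}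
    (ha : a ∈ sat φ1 φ2 I) (hb : b ∈ sat φ1 φ2 I) : a + b ∈ sat φ1 φ2 I := by
  intro φ
  have := Submodule.add_mem _ (ha φ) (hb φ)
  convert this using 1
  funext i
  simp [idDouble_add, map_add]

lemma mul_mem_span {A : Type*} [CommRing A] {ι : Type*} (u : ι → A) (s : Set (ι → A))
    (hs : ∀ w ∈ s, u * w ∈ Submodule.span A s) :
    ∀ w ∈ Submodule.span A s, u * w ∈ Submodule.span A s := by
  intro w hw
  induction hw using Submodule.span_induction with
  | mem x hx => exact hs x hx
  | zero => simp
  | add x y _ _ hx hy => rw [mul_add]; exact Submodule.add_mem _ hx hy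
  | smul c x _ hx => rw [mul_smul_comm]; exact Submodule.smul_mem _ _ hx

lemma mul_mem_sat (φ1 φ2 : R →+* S) {I : Ideal R} (r : R) {a : R}
    (ha : a ∈ sat φ1 φ2 I) : r * a ∈ sat φ1 φ2 I := by
  intro φ
  have inner : ∀ n ∈ idealDouble φ1 φ2 I, idDouble φ1 φ2 r * n ∈ idealDouble φ1 φ2 I := by
    refine mul_mem_span _ _ ?_
    rintro w ⟨m, hm, rfl⟩
    rw [← idDouble_mul]
    exact Submodule.subset_span ⟨r * m, I.mul_mem_left r hm, rfl⟩
  have outer := mul_mem_span (A := PowerSeries ℂ) (fun i => φ (idDouble φ1 φ2 r i))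
    ((fun m : Fin 2 → S => fun i => φ (m i)) '' (idealDouble φ1 φ2 I : Set (Fin 2 → S)))
    (by
      rintro w ⟨n, hn, rfl⟩
      refine Submodule.subset_span ⟨idDouble φ1 φ2 r * n, inner n hn, ?_⟩
      funext i
      simp [Pi.mul_apply, map_mul])
  have key := outer _ (ha φ)
  convert key using 1
  funext i
  simp [idDouble_mul, Pi.mul_apply, map_mul]

lemma span_le_sat (φ1 φ2 : R →+* S) {I : Ideal R} {s : Set R}
    (hs : ∀ x ∈ s, x ∈ sat φ1 φ2 I) :
    (Ideal.span s : Set R) ⊆ sat φ1 φ2 I := by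
  intro x hx
  rw [SetLike.mem_coe] at hx
  induction hx using Submodule.span_induction with
  | mem y hy => exact hs y hy
  | zero => exact zero_mem_sat φ1 φ2 I
  | add x y _ _ hx hy => exact add_mem_sat φ1 φ2 hx hy
  | smul c x _ hx => rw [smul_eq_mul]; exact mul_mem_sat φ1 φ2 c hx

lemma det_updateColumn_finset_sum {k : ℕ} (A : Matrix (Fin k) (Fin k) R) (b0 : Fin k)
    {ι : Type*} [DecidableEq ι] (s : Finset ι) (f : ι → Fin k → R) :
    (A.updateCol b0 (fun a => ∑ j ∈ s, f j a)).det
      = ∑ j ∈ s, (A.updateCol b0 (f j)).det := by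
  induction s using Finset.induction with
  | empty =>
    simp only [Finset.sum_empty]
    exact Matrix.det_eq_zero_of_column_eq_zero b0 (by simp)
  | @insert x s' hx ih =>
    have hfun : (fun a => ∑ j ∈ insert x s', f j a) = f x + fun a => ∑ j ∈ s', f j a := by
      funext a
      rw [Finset.sum_insert hx]
      rfl
    rw [hfun, Matrix.det_updateCol_add, ih, Finset.sum_insert hx]

lemma colLin {k p : ℕ} (A : Matrix (Fin k) (Fin k) R) (b0 : Fin k)
    (I : Fin k → Fin p) (v : Fin p → R) :
    (A.updateCol b0 (fun a => v (I a))).det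
      = ∑ j, v j * (A.updateCol b0 (fun a => if I a = j then 1 else 0)).det := by
  have h1 : (fun a => v (I a))
      = fun a => ∑ j, (v j • fun a' => if I a' = j then (1:R) else 0) a := by
    funext a
    simp [mul_ite, Finset.sum_ite_eq]
  rw [h1, det_updateColumn_finset_sum]
  exact Finset.sum_congr rfl fun j _ => Matrix.det_updateCol_smul A b0 (v j) _

end Lip

/-- `M_{S₂} ⊆ M_{S₃}`: if `M` is generated by the columns of `gen` (a module of generic
rank `k`) and `ψ·h ∈ (ψ·M)_S` for every `ψ : X → Hom(ℂ^p, ℂ)`, then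
`I_k(h, M) ⊆ (I_k(M))_S`. -/
theorem satTwo_le_satThree {R S : Type*} [CommRing R] [CommRing S] {p r k : ℕ}
    (φ1 φ2 : R →+* S) (gen : Fin r → (Fin p → R)) (M : Submodule R (Fin p → R))
    (hM : M = Submodule.span R (Set.range gen)) (h : Fin p → R)
    (hh : ∀ ψ : Fin p → R,
      (∑ i, ψ i * h i) ∈
        Lip.sat φ1 φ2 (Ideal.span {x : R | ∃ m ∈ M, x = ∑ i, ψ i * m i})) :
    (Ideal.span {d : R | ∃ (I : Fin k → Fin p) (J : Fin k → Fin (r + 1)),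
        d = Matrix.det (Matrix.of fun a b : Fin k =>
          (Fin.cons h gen : Fin (r + 1) → Fin p → R) (J b) (I a))} : Set R)
      ⊆ Lip.sat φ1 φ2
          (Ideal.span {d : R | ∃ (I : Fin k → Fin p) (J : Fin k → Fin r),
            d = Matrix.det (Matrix.of fun a b : Fin k => gen (J b) (I a))}) := by
  apply Lip.span_le_sat
  rintro d ⟨I, J, rfl⟩
  by_cases hJ0 : ∀ b, J b ≠ 0
  · -- the minor does not involve the column `h`
    refine Lip.mem_sat_of_mem _ _ (Ideal.subset_span ⟨I, fun b => (J b).pred (hJ0 b), ?_⟩)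
    congr 1
    ext a b
    simp only [Matrix.of_apply]
    conv_lhs => rw [← Fin.succ_pred (J b) (hJ0 b)]
    rw [Fin.cons_succ]
  · push_neg at hJ0
    obtain ⟨b0, hb0⟩ := hJ0
    by_cases htwo : ∃ b1, b1 ≠ b0 ∧ J b1 = 0
    · -- the minor has two equal columns, hence vanishes
      obtain ⟨b1, hne, hb1⟩ := htwo
      have : (Matrix.of fun a b => (Fin.cons h gen : Fin (r+1) → Fin p → R) (J b) (I a)).det
          = 0 := by
        refine Matrix.det_zero_of_column_eq hne.symm fun a => ?_
        simp [hb0, hb1]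
      rw [this]
      exact Lip.zero_mem_sat φ1 φ2 _
    · push_neg at htwo
      set N : Matrix (Fin k) (Fin k) R :=
        Matrix.of fun a b => (Fin.cons h gen : Fin (r+1) → Fin p → R) (J b) (I a) with hN
      set ψ : Fin p → R :=
        fun j => (N.updateCol b0 (fun a => if I a = j then 1 else 0)).det with hψ
      have hupd : ∀ v : Fin p → R,
          (N.updateCol b0 (fun a => v (I a))).det = ∑ i, ψ i * v i := by
        intro v
        rw [Lip.colLin]
        exact Finset.sum_congr rfl fun j _ => mul_comm _ _
      have hd : N.det = ∑ i, ψ i * h i := by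
        have hN0 : N.updateCol b0 (fun a => h (I a)) = N := by
          ext a b
          rw [Matrix.updateCol_apply]
          split
          · rename_i hb
            subst hb
            simp [hN, hb0]
          · rfl
        rw [← hupd h, hN0]
      rw [hd]
      refine Lip.sat_mono φ1 φ2 ?_ (hh ψ)
      rw [Ideal.span_le]
      rintro x ⟨m, hm, rfl⟩
      rw [hM] at hm
      induction hm using Submodule.span_induction with
      | mem m hm =>
        obtain ⟨t, rfl⟩ := hm
        rw [← hupd (gen t)]
        refine Ideal.subset_span ⟨I, fun b => Fin.cases t id (J b), ?_⟩
        congr 1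
        ext a b
        rw [Matrix.updateCol_apply]
        split
        · rename_i hb
          subst hb
          simp [hb0]
        · rename_i hb
          simp only [hN, Matrix.of_apply]
          conv_lhs => rw [← Fin.succ_pred (J b) (htwo b hb)]
          conv_rhs => rw [← Fin.succ_pred (J b) (htwo b hb)]
          simp only [Fin.cons_succ, Fin.cases_succ, id]
      | zero => simp
      | add x y _ _ hx hy =>
        have : ∑ i, ψ i * (x + y) i = (∑ i, ψ i * x i) + ∑ i, ψ i * y i := by
          rw [← Finset.sum_add_distrib]
          exact Finset.sum_congr rfl fun i _ => by simp [mul_add]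
        rw [this]
        exact Ideal.add_mem _ hx hy
      | smul c x _ hx =>
        have : ∑ i, ψ i * (c • x) i = c * ∑ i, ψ i * x i := by
          rw [Finset.mul_sum]
          exact Finset.sum_congr rfl fun i _ => by simp [Pi.smul_apply, smul_eq_mul]; ring
        rw [this]
        exact Ideal.mul_mem_left _ c hx
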